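/- Let σ > 0, let A be a finite index set, let φ_k ∈ ℝⁿ and γ_k ≥ 0 for k ∈ A, set B = Σ_{k∈A} γ_k φ_kφ_kᵀ, C = σ²Iₙ + B, R = σ²C⁻¹, and let y ∈ ℝⁿ. For each index i ∉ A with φ_i ≠ 0, define q_i = φ_iᵀC⁻¹y, s_i = φ_iᵀC⁻¹φ_i, and Δ_add(i) = max_{γ≥0} (1/2)( q_i²γ/(1+γs_i) − log(1+γs_i) ). Then every index i ∉ A maximizing |φ_iᵀ R y| / √(φ_iᵀ R φ_i) over i ∉ A also maximizes Δ_add(i) over i ∉ A. -/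

import Mathlib

open Matrix

private lemma sum_mulVec' {n m : ℕ} (A : Finset (Fin m)) (M : Fin m → Matrix (Fin n) (Fin n) ℝ)
    (x : Fin n → ℝ) : (∑ k ∈ A, M k) *ᵥ x = ∑ k ∈ A, (M k) *ᵥ x := by
  ext i
  simp [mulVec, dotProduct, Matrix.sum_apply, Finset.sum_mul, Finset.sum_apply]
  exact Finset.sum_comm

private lemma dotProduct_finsum {n m : ℕ} (A : Finset (Fin m)) (v : Fin m → Fin n → ℝ)
    (x : Fin n → ℝ) : x ⬝ᵥ (∑ k ∈ A, v k) = ∑ k ∈ A, x ⬝ᵥ v k := by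
  simp [dotProduct, Finset.mul_sum, Finset.sum_apply]
  exact Finset.sum_comm

private lemma vecMulVec_mulVec' {n : ℕ} (w v x : Fin n → ℝ) :
    (vecMulVec w v) *ᵥ x = (v ⬝ᵥ x) • w := by
  ext i
  simp [mulVec, vecMulVec_apply, dotProduct, Finset.mul_sum, Finset.sum_mul]
  exact Finset.sum_congr rfl fun j _ => by ring

private lemma quad_eval {n m : ℕ} (σ : ℝ) (A : Finset (Fin m)) (φ : Fin m → Fin n → ℝ)
    (γv : Fin m → ℝ) (x : Fin n → ℝ) :
    x ⬝ᵥ ((σ^2 • (1 : Matrix (Fin n) (Fin n) ℝ) + ∑ k ∈ A, γv k • vecMulVec (φ k) (φ k)) *ᵥ x)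
      = σ^2 * (x ⬝ᵥ x) + ∑ k ∈ A, γv k * (φ k ⬝ᵥ x)^2 := by
  rw [add_mulVec, dotProduct_add, smul_mulVec, dotProduct_smul, sum_mulVec',
    dotProduct_finsum]
  congr 1
  · simp
  · refine Finset.sum_congr rfl fun k _ => ?_
    rw [smul_mulVec, dotProduct_smul, vecMulVec_mulVec', dotProduct_smul,
      dotProduct_comm, smul_eq_mul, smul_eq_mul]
    ring

private lemma C_posdef {n m : ℕ} (σ : ℝ) (hσ : 0 < σ) (A : Finset (Fin m))
    (φ : Fin m → Fin n → ℝ) (γv : Fin m → ℝ) (hγ : ∀ k ∈ A, 0 ≤ γv k) :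
    (σ^2 • (1 : Matrix (Fin n) (Fin n) ℝ) + ∑ k ∈ A, γv k • vecMulVec (φ k) (φ k)).PosDef := by
  rw [posDef_iff_dotProduct_mulVec]
  constructor
  · ext i j
    simp only [conjTranspose_apply, Matrix.add_apply, Matrix.smul_apply, Matrix.one_apply,
      Matrix.sum_apply, vecMulVec_apply, star_trivial, smul_eq_mul]
    rw [eq_comm]
    congr 1
    · simp [eq_comm]
    · exact Finset.sum_congr rfl fun k _ => by ring
  · intro x hx
    rw [star_trivial, quad_eval]
    have h1 : 0 < x ⬝ᵥ x := by
      have := dotProduct_star_self_pos_iff (v := x)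
      simp only [star_trivial] at this
      exact this.mpr hx
    have h2 : 0 ≤ ∑ k ∈ A, γv k * (φ k ⬝ᵥ x)^2 :=
      Finset.sum_nonneg fun k hk => mul_nonneg (hγ k hk) (sq_nonneg _)
    have h3 : 0 < σ^2 * (x ⬝ᵥ x) := mul_pos (pow_pos hσ 2) h1
    linarith

/-- Lemma 2 of the paper: with `C = σ²I + Σ_{k∈A} γ_k φ_kφ_kᵀ`, `R = σ²C⁻¹`,
`Δ_add(i) = max_{γ≥0} (1/2)(q_i²γ/(1+γs_i) − log(1+γs_i))`, every inactive index maximizing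
`|φ_iᵀRy|/√(φ_iᵀRφ_i)` over `i ∉ A` also maximizes `Δ_add(i)` over `i ∉ A`. -/
theorem sbl_acquisition_matching_pursuit {n m : ℕ} (σ : ℝ) (hσ : 0 < σ)
    (A : Finset (Fin m)) (φ : Fin m → Fin n → ℝ) (γv : Fin m → ℝ)
    (hγ : ∀ k ∈ A, 0 ≤ γv k) (y : Fin n → ℝ) (hφ : ∀ i ∉ A, φ i ≠ 0) :
    let B : Matrix (Fin n) (Fin n) ℝ := ∑ k ∈ A, γv k • vecMulVec (φ k) (φ k)
    let C : Matrix (Fin n) (Fin n) ℝ := σ^2 • (1 : Matrix (Fin n) (Fin n) ℝ) + B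
    let R : Matrix (Fin n) (Fin n) ℝ := σ^2 • C⁻¹
    let q : Fin m → ℝ := fun i => φ i ⬝ᵥ (C⁻¹ *ᵥ y)
    let s : Fin m → ℝ := fun i => φ i ⬝ᵥ (C⁻¹ *ᵥ φ i)
    let Δadd : Fin m → ℝ := fun i =>
      sSup ((fun γ : ℝ => (1/2) * ((q i)^2 * γ / (1 + γ * s i) - Real.log (1 + γ * s i))) ''
        Set.Ici 0)
    let crit : Fin m → ℝ := fun i => |φ i ⬝ᵥ (R *ᵥ y)| / Real.sqrt (φ i ⬝ᵥ (R *ᵥ φ i))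
    ∀ i ∉ A, (∀ j ∉ A, crit j ≤ crit i) → ∀ j ∉ A, Δadd j ≤ Δadd i := by
  intro B C R q s Δadd crit i hi hmax j hj
  have hC : C.PosDef := C_posdef σ hσ A φ γv hγ
  have hCi : C⁻¹.PosDef := hC.inv
  -- positivity of s on inactive indices
  have hs : ∀ k, k ∉ A → 0 < s k := by
    intro k hk
    have := hCi.dotProduct_mulVec_pos (hφ k hk)
    rw [star_trivial] at this
    exact this
  have hsi := hs i hi
  have hsj := hs j hj
  -- crit in terms of q and s
  have hcrit : ∀ k, k ∉ A → crit k = σ * |q k| / Real.sqrt (s k) := by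
    intro k hk
    have h1 : φ k ⬝ᵥ (R *ᵥ y) = σ^2 * q k := by
      show φ k ⬝ᵥ ((σ^2 • C⁻¹) *ᵥ y) = σ^2 * (φ k ⬝ᵥ (C⁻¹ *ᵥ y))
      rw [smul_mulVec, dotProduct_smul, smul_eq_mul]
    have h2 : φ k ⬝ᵥ (R *ᵥ φ k) = σ^2 * s k := by
      show φ k ⬝ᵥ ((σ^2 • C⁻¹) *ᵥ φ k) = σ^2 * (φ k ⬝ᵥ (C⁻¹ *ᵥ φ k))
      rw [smul_mulVec, dotProduct_smul, smul_eq_mul]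
    rw [show crit k = |φ k ⬝ᵥ (R *ᵥ y)| / Real.sqrt (φ k ⬝ᵥ (R *ᵥ φ k)) from rfl, h1, h2,
      Real.sqrt_mul (by positivity), Real.sqrt_sq hσ.le, abs_mul, abs_of_nonneg (by positivity)]
    rw [sq]
    have hsq : Real.sqrt (s k) ≠ 0 := ne_of_gt (Real.sqrt_pos.mpr (hs k hk))
    field_simp
  -- from crit-maximality get q j ^2 * s i ≤ q i ^2 * s j
  have hkey : q j ^ 2 * s i ≤ q i ^ 2 * s j := by
    have h := hmax j hj
    rw [hcrit i hi, hcrit j hj] at h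
    have h' : |q j| / Real.sqrt (s j) ≤ |q i| / Real.sqrt (s i) := by
      rw [mul_div_assoc, mul_div_assoc] at h
      exact le_of_mul_le_mul_left h hσ
    have h2 : (|q j| / Real.sqrt (s j))^2 ≤ (|q i| / Real.sqrt (s i))^2 :=
      pow_le_pow_left₀ (by positivity) h' 2
    rw [div_pow, div_pow, sq_abs, sq_abs, Real.sq_sqrt hsi.le, Real.sq_sqrt hsj.le] at h2
    rw [div_le_div_iff₀ hsj hsi] at h2
    linarith
  -- the objective functions
  set f : Fin m → ℝ → ℝ := fun k γ =>
    (1/2) * ((q k)^2 * γ / (1 + γ * s k) - Real.log (1 + γ * s k)) with hf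
  -- boundedness for index i
  have hbdd : BddAbove (f i '' Set.Ici 0) := by
    refine ⟨q i ^ 2 / (2 * s i), ?_⟩
    rintro x ⟨γ, hγ0, rfl⟩
    have hγ0 : (0:ℝ) ≤ γ := hγ0
    have hu : (0:ℝ) < 1 + γ * s i := by nlinarith
    have hlog : 0 ≤ Real.log (1 + γ * s i) := Real.log_nonneg (by nlinarith)
    have hdiv : q i ^ 2 * γ / (1 + γ * s i) ≤ q i ^ 2 / s i := by
      rw [div_le_div_iff₀ hu hsi]
      nlinarith [sq_nonneg (q i)]
    have heq : q i ^ 2 / (2 * s i) = (1/2) * (q i ^ 2 / s i) := by ring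
    simp only [hf]
    rw [heq]
    nlinarith
  -- nonemptiness
  have hne : (f j '' Set.Ici 0).Nonempty := ⟨f j 0, ⟨0, Set.self_mem_Ici, rfl⟩⟩
  -- comparison of suprema
  refine csSup_le hne ?_
  rintro x ⟨γ, hγ0, rfl⟩
  have hγ0 : (0:ℝ) ≤ γ := hγ0
  set γ' : ℝ := γ * s j / s i with hγ'
  have hγ'0 : (0:ℝ) ≤ γ' := by positivity
  have hu : 1 + γ' * s i = 1 + γ * s j := by
    rw [hγ', div_mul_cancel₀ _ hsi.ne']
  have hupos : (0:ℝ) < 1 + γ * s j := by nlinarith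
  have hnum : q j ^ 2 * γ ≤ q i ^ 2 * γ' := by
    have heq : q i ^ 2 * γ' = q i ^ 2 * γ * s j / s i := by rw [hγ']; ring
    rw [heq, le_div_iff₀ hsi]
    nlinarith
  have hle : f j γ ≤ f i γ' := by
    simp only [hf, hu]
    gcongr
  calc f j γ ≤ f i γ' := hle
    _ ≤ sSup (f i '' Set.Ici 0) := le_csSup hbdd ⟨γ', hγ'0, rfl⟩
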